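/- Let G be a Garside group with positive monoid G⁺ and Garside element Δ, let g ∈ G and n ≥ 1. Suppose r is the greatest element of the set {t ∈ ℤ : Δ^t ≤_L h for some conjugate h of g} and m is the greatest element of the set {t ∈ ℤ : Δ^t ≤_L h for some conjugate h of gⁿ}. Then n·r ≤ m < n·r + n (equivalently, inf_s(g) ≤ inf_s(gⁿ)/n < inf_s(g) + 1). -/

import Mathlib

/-- `a` left-divides `b` in the monoid `M`. -/
def dvdL {M : Type*} [Monoid M] (a b : M) : Prop := ∃ c, a * c = b

/-- `a` right-divides `b` in the monoid `M`. -/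
def dvdR {M : Type*} [Monoid M] (a b : M) : Prop := ∃ c, c * a = b

/-- `L(a)`, the set of left divisors of `a`. -/
def Lset {M : Type*} [Monoid M] (a : M) : Set M := {x | dvdL x a}

/-- `R(a)`, the set of right divisors of `a`. -/
def Rset {M : Type*} [Monoid M] (a : M) : Set M := {x | dvdR x a}

/-- `a` is an atom: `a ≠ 1` and `a = b * c` implies `b = 1` or `c = 1`. -/
def IsAtomElt {M : Type*} [Monoid M] (a : M) : Prop :=
  a ≠ 1 ∧ ∀ b c : M, a = b * c → b = 1 ∨ c = 1

/-- `M` is atomic: every element is a finite product of atoms, and the lengths of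
expressions of a given element as products of atoms are bounded above. -/
def Atomic (M : Type*) [Monoid M] : Prop :=
  (∀ a : M, ∃ l : List M, (∀ x ∈ l, IsAtomElt x) ∧ l.prod = a) ∧
  (∀ a : M, ∃ N : ℕ, ∀ l : List M, (∀ x ∈ l, IsAtomElt x) → l.prod = a → l.length ≤ N)

/-- `Δ` is a Garside element: `L(Δ) = R(Δ)` and `L(Δ)` generates `M`. -/
def IsGarsideElt {M : Type*} [Monoid M] (Δ : M) : Prop :=
  Lset Δ = Rset Δ ∧ Submonoid.closure (Lset Δ) = ⊤

/-- `d` is a greatest common lower bound of `a` and `b` with respect to `≤_L`. -/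
def IsGlbL {M : Type*} [Monoid M] (a b d : M) : Prop :=
  dvdL d a ∧ dvdL d b ∧ ∀ c : M, dvdL c a → dvdL c b → dvdL c d

/-- `d` is a least common upper bound of `a` and `b` with respect to `≤_L`. -/
def IsLubL {M : Type*} [Monoid M] (a b d : M) : Prop :=
  dvdL a d ∧ dvdL b d ∧ ∀ c : M, dvdL a c → dvdL b c → dvdL d c

/-- `d` is a greatest common lower bound of `a` and `b` with respect to `≤_R`. -/
def IsGlbR {M : Type*} [Monoid M] (a b d : M) : Prop :=
  dvdR d a ∧ dvdR d b ∧ ∀ c : M, dvdR c a → dvdR c b → dvdR c d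

/-- `d` is a least common upper bound of `a` and `b` with respect to `≤_R`. -/
def IsLubR {M : Type*} [Monoid M] (a b d : M) : Prop :=
  dvdR a d ∧ dvdR b d ∧ ∀ c : M, dvdR a c → dvdR b c → dvdR d c

/-- `M` is a Garside monoid: finitely generated, left and right cancellative, atomic,
`≤_L`- and `≤_R`-lattice conditions, and it possesses a Garside element. -/
def IsGarsideMonoid (M : Type*) [Monoid M] : Prop :=
  (∃ S : Set M, S.Finite ∧ Submonoid.closure S = ⊤) ∧
  (∀ a b c : M, a * b = a * c → b = c) ∧
  (∀ a b c : M, b * a = c * a → b = c) ∧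
  Atomic M ∧
  (∀ a b : M, ∃ d, IsGlbL a b d) ∧
  (∀ a b : M, ∃ d, IsLubL a b d) ∧
  (∀ a b : M, ∃ d, IsGlbR a b d) ∧
  (∀ a b : M, ∃ d, IsLubR a b d) ∧
  (∃ Δ : M, IsGarsideElt Δ)

/-- Group-level left divisibility: `a ≤_L b` iff `a⁻¹ * b` is positive. -/
def gdvdL {G : Type*} [Group G] (P : Submonoid G) (a b : G) : Prop := a⁻¹ * b ∈ P

/-- Group-level right divisibility: `a ≤_R b` iff `b * a⁻¹` is positive. -/
def gdvdR {G : Type*} [Group G] (P : Submonoid G) (a b : G) : Prop := b * a⁻¹ ∈ P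

/-- `G` is a Garside group with positive monoid `P` and chosen Garside element `Δ`:
`P` is a Garside monoid, every element of `G` is a fraction `a * b⁻¹` of positive
elements, and `Δ` is a Garside element of `P`. -/
def IsGarsideGroup {G : Type*} [Group G] (P : Submonoid G) (Δ : G) : Prop :=
  IsGarsideMonoid P ∧
  (∀ g : G, ∃ a b : P, g = (a : G) * (b : G)⁻¹) ∧
  ∃ hΔ : Δ ∈ P, IsGarsideElt (⟨Δ, hΔ⟩ : P)

section Tau
variable {G : Type*} [Group G] {P : Submonoid G} {Δ : G} (hΔ : Δ ∈ P)

/-- conjugation by `Δ⁻¹` preserves positivity -/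
lemma tau1 (hLR : Lset (⟨Δ, hΔ⟩ : P) = Rset (⟨Δ, hΔ⟩ : P))
    (hcl : Submonoid.closure (Lset (⟨Δ, hΔ⟩ : P)) = ⊤) :
    ∀ p ∈ P, Δ⁻¹ * p * Δ ∈ P := by
  intro p hp
  have hmem : (⟨p, hp⟩ : P) ∈ Submonoid.closure (Lset (⟨Δ, hΔ⟩ : P)) := by
    rw [hcl]; trivial
  have key : ∀ q : P, q ∈ Submonoid.closure (Lset (⟨Δ, hΔ⟩ : P)) →
      Δ⁻¹ * (q : G) * Δ ∈ P := by
    intro q hq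
    induction hq using Submonoid.closure_induction with
    | mem x hx =>
      obtain ⟨c, hc⟩ := hx
      have hcR : c ∈ Rset (⟨Δ, hΔ⟩ : P) := ⟨x, hc⟩
      rw [← hLR] at hcR
      obtain ⟨c'', hc''⟩ := hcR
      have h1 : (x : G) * c = Δ := congrArg Subtype.val hc
      have h2 : (c : G) * c'' = Δ := congrArg Subtype.val hc''
      have hx' : (x : G) = Δ * (c : G)⁻¹ := by rw [← h1]; group
      have : Δ⁻¹ * (x : G) * Δ = (c'' : G) := by
        rw [hx', ← h2]; group
      rw [this]; exact c''.2
    | one => simpa using P.one_mem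
    | mul a b ha hb iha ihb =>
      have : Δ⁻¹ * ((a : G) * b) * Δ = (Δ⁻¹ * a * Δ) * (Δ⁻¹ * b * Δ) := by group
      rw [Submonoid.coe_mul, this]
      exact P.mul_mem iha ihb
  exact key ⟨p, hp⟩ hmem

lemma tau2 (hLR : Lset (⟨Δ, hΔ⟩ : P) = Rset (⟨Δ, hΔ⟩ : P))
    (hcl : Submonoid.closure (Lset (⟨Δ, hΔ⟩ : P)) = ⊤) :
    ∀ p ∈ P, Δ * p * Δ⁻¹ ∈ P := by
  intro p hp
  have hmem : (⟨p, hp⟩ : P) ∈ Submonoid.closure (Lset (⟨Δ, hΔ⟩ : P)) := by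
    rw [hcl]; trivial
  have key : ∀ q : P, q ∈ Submonoid.closure (Lset (⟨Δ, hΔ⟩ : P)) →
      Δ * (q : G) * Δ⁻¹ ∈ P := by
    intro q hq
    induction hq using Submonoid.closure_induction with
    | mem x hx =>
      have hxR : x ∈ Rset (⟨Δ, hΔ⟩ : P) := hLR ▸ hx
      obtain ⟨c', hc'⟩ := hxR
      have hc'L : c' ∈ Lset (⟨Δ, hΔ⟩ : P) := ⟨x, hc'⟩
      have hc'R : c' ∈ Rset (⟨Δ, hΔ⟩ : P) := hLR ▸ hc'L
      obtain ⟨u, hu⟩ := hc'R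
      have h1 : (c' : G) * x = Δ := congrArg Subtype.val hc'
      have h2 : (u : G) * c' = Δ := congrArg Subtype.val hu
      have hx' : (x : G) = (c' : G)⁻¹ * Δ := by rw [← h1]; group
      have : Δ * (x : G) * Δ⁻¹ = (u : G) := by
        rw [hx', ← h2]; group
      rw [this]; exact u.2
    | one => simpa using P.one_mem
    | mul a b ha hb iha ihb =>
      have : Δ * ((a : G) * b) * Δ⁻¹ = (Δ * a * Δ⁻¹) * (Δ * b * Δ⁻¹) := by group
      rw [Submonoid.coe_mul, this]
      exact P.mul_mem iha ihb
  exact key ⟨p, hp⟩ hmem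

/-- conjugation by any integer power of `Δ` preserves positivity -/
lemma conjP (hLR : Lset (⟨Δ, hΔ⟩ : P) = Rset (⟨Δ, hΔ⟩ : P))
    (hcl : Submonoid.closure (Lset (⟨Δ, hΔ⟩ : P)) = ⊤) :
    ∀ (k : ℤ), ∀ p ∈ P, Δ ^ k * p * (Δ ^ k)⁻¹ ∈ P := by
  have hnat1 : ∀ (n : ℕ), ∀ p ∈ P, Δ ^ (n:ℤ) * p * (Δ ^ (n:ℤ))⁻¹ ∈ P := by
    intro n
    induction n with
    | zero => intro p hp; simpa using hp
    | succ n ih =>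
      intro p hp
      have h1 : Δ ^ ((n:ℤ)+1) * p * (Δ ^ ((n:ℤ)+1))⁻¹
          = Δ ^ (n:ℤ) * (Δ * p * Δ⁻¹) * (Δ ^ (n:ℤ))⁻¹ := by group
      have : ((n:ℤ)+1) = ((n+1 : ℕ) : ℤ) := by push_cast; ring
      rw [← this, h1]
      exact ih _ (tau2 hΔ hLR hcl p hp)
  have hnat2 : ∀ (n : ℕ), ∀ p ∈ P, Δ ^ (-(n:ℤ)) * p * (Δ ^ (-(n:ℤ)))⁻¹ ∈ P := by
    intro n
    induction n with
    | zero => intro p hp; simpa using hp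
    | succ n ih =>
      intro p hp
      have h1 : Δ ^ (-((n:ℤ)+1)) * p * (Δ ^ (-((n:ℤ)+1)))⁻¹
          = Δ ^ (-(n:ℤ)) * (Δ⁻¹ * p * Δ) * (Δ ^ (-(n:ℤ)))⁻¹ := by group
      have : (-((n:ℤ)+1)) = (-((n+1 : ℕ) : ℤ)) := by push_cast; ring
      rw [← this, h1]
      exact ih _ (tau1 hΔ hLR hcl p hp)
  intro k p hp
  rcases Int.eq_nat_or_neg k with ⟨n, rfl | rfl⟩
  · exact hnat1 n p hp
  · exact hnat2 n p hp

end Tau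

section Bounds
variable {G : Type*} [Group G] {P : Submonoid G} {Δ : G} (hΔ : Δ ∈ P)
variable (hLR : Lset (⟨Δ, hΔ⟩ : P) = Rset (⟨Δ, hΔ⟩ : P))
variable (hcl : Submonoid.closure (Lset (⟨Δ, hΔ⟩ : P)) = ⊤)

include hΔ hLR hcl in
/-- every positive element left-divides some power of `Δ` -/
lemma L0 : ∀ p ∈ P, ∃ k : ℕ, p⁻¹ * Δ ^ (k:ℤ) ∈ P := by
  intro p hp
  have hmem : (⟨p, hp⟩ : P) ∈ Submonoid.closure (Lset (⟨Δ, hΔ⟩ : P)) := by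
    rw [hcl]; trivial
  have key : ∀ q : P, q ∈ Submonoid.closure (Lset (⟨Δ, hΔ⟩ : P)) →
      ∃ k : ℕ, (q : G)⁻¹ * Δ ^ (k:ℤ) ∈ P := by
    intro q hq
    induction hq using Submonoid.closure_induction with
    | mem x hx =>
      obtain ⟨c, hc⟩ := hx
      have h1 : (x : G) * c = Δ := congrArg Subtype.val hc
      refine ⟨1, ?_⟩
      have hx' : (x : G)⁻¹ * Δ ^ ((1:ℕ):ℤ) = (c : G) := by
        simp only [Nat.cast_one, zpow_one]
        rw [← h1]; group
      rw [hx']; exact c.2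
    | one => exact ⟨0, by simpa using P.one_mem⟩
    | mul a b ha hb iha ihb =>
      obtain ⟨k, hk⟩ := iha
      obtain ⟨l, hl⟩ := ihb
      refine ⟨k + l, ?_⟩
      have heq : ((a : G) * b)⁻¹ * Δ ^ ((k+l : ℕ):ℤ)
          = ((b : G)⁻¹ * Δ ^ (l:ℤ)) *
            ((Δ ^ (-(l:ℤ))) * ((a : G)⁻¹ * Δ ^ (k:ℤ)) * (Δ ^ (-(l:ℤ)))⁻¹) := by
        push_cast; group
      rw [Submonoid.coe_mul, heq]
      exact P.mul_mem hl (conjP hΔ hLR hcl _ _ hk)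
  exact key ⟨p, hp⟩ hmem

include hΔ hLR hcl in
/-- every group element becomes positive after multiplying by a big power of `Δ` -/
lemma L1 (hfr : ∀ g : G, ∃ a b : P, g = (a : G) * (b : G)⁻¹) :
    ∀ g : G, ∃ k : ℕ, Δ ^ (k:ℤ) * g ∈ P := by
  intro g
  obtain ⟨a, b, rfl⟩ := hfr g
  obtain ⟨k, hk⟩ := L0 hΔ hLR hcl (b : G) b.2
  refine ⟨k, ?_⟩
  have heq : Δ ^ (k:ℤ) * ((a : G) * (b : G)⁻¹)
      = Δ ^ (k:ℤ) * ((a : G) * ((b : G)⁻¹ * Δ ^ (k:ℤ))) * (Δ ^ (k:ℤ))⁻¹ := by group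
  rw [heq]
  exact conjP hΔ hLR hcl _ _ (P.mul_mem a.2 hk)

include hΔ in
lemma bump {g : G} {N k : ℕ} (hNk : N ≤ k) (h : Δ ^ (N:ℤ) * g ∈ P) :
    Δ ^ (k:ℤ) * g ∈ P := by
  have heq : Δ ^ (k:ℤ) * g = Δ ^ ((k - N : ℕ):ℤ) * (Δ ^ (N:ℤ) * g) := by
    have : ((k - N : ℕ):ℤ) = (k:ℤ) - (N:ℤ) := by omega
    rw [this]; group
  rw [heq]
  have hpow : Δ ^ ((k - N : ℕ):ℤ) ∈ P := by
    rw [zpow_natCast]; exact pow_mem hΔ _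
  exact P.mul_mem hpow h

include hΔ in
lemma zpow_nonneg_mem {t : ℤ} (ht : 0 ≤ t) : Δ ^ t ∈ P := by
  obtain ⟨k, rfl⟩ := Int.eq_ofNat_of_zero_le ht
  rw [zpow_natCast]; exact pow_mem hΔ _

end Bounds

section Glb
variable {G : Type*} [Group G] {P : Submonoid G}

lemma dvdL_of_grp {a b : P} (h : (a : G)⁻¹ * b ∈ P) : dvdL a b := by
  refine ⟨⟨(a : G)⁻¹ * b, h⟩, ?_⟩
  ext
  simp

lemma grp_of_dvdL {a b : P} (h : dvdL a b) : (a : G)⁻¹ * b ∈ P := by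
  obtain ⟨c, hc⟩ := h
  have h1 : (a : G) * c = b := congrArg Subtype.val hc
  have : (a : G)⁻¹ * b = c := by rw [← h1]; group
  rw [this]; exact c.2

lemma dvdL_refl {M : Type*} [Monoid M] (a : M) : dvdL a a := ⟨1, mul_one a⟩

lemma dvdL_trans {M : Type*} [Monoid M] {a b c : M} (h1 : dvdL a b) (h2 : dvdL b c) :
    dvdL a c := by
  obtain ⟨u, hu⟩ := h1; obtain ⟨v, hv⟩ := h2
  exact ⟨u * v, by rw [← mul_assoc, hu, hv]⟩

/-- glb of a nonempty list -/
lemma listGlb (hglb : ∀ a b : P, ∃ d, IsGlbL a b d) :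
    ∀ (l : List P), l ≠ [] →
      ∃ d : P, (∀ b ∈ l, dvdL d b) ∧ (∀ c : P, (∀ b ∈ l, dvdL c b) → dvdL c d) := by
  intro l
  induction l with
  | nil => intro h; exact absurd rfl h
  | cons a l ih =>
    intro _
    rcases eq_or_ne l [] with rfl | hl
    · refine ⟨a, ?_, ?_⟩
      · intro b hb; simp at hb; subst hb; exact dvdL_refl _
      · intro c hc; exact hc a (by simp)
    · obtain ⟨d', hd'1, hd'2⟩ := ih hl
      obtain ⟨d, hda, hdd', hmax⟩ := hglb a d'
      refine ⟨d, ?_, ?_⟩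
      · intro b hb
        rcases List.mem_cons.mp hb with rfl | hb
        · exact hda
        · exact dvdL_trans hdd' (hd'1 b hb)
      · intro c hc
        exact hmax c (hc a (by simp)) (hd'2 c (fun b hb => hc b (List.mem_cons_of_mem a hb)))

end Glb

section Star
variable {G : Type*} [Group G] {P : Submonoid G} {Δ : G} (hΔ : Δ ∈ P)
variable (hLR : Lset (⟨Δ, hΔ⟩ : P) = Rset (⟨Δ, hΔ⟩ : P))
variable (hcl : Submonoid.closure (Lset (⟨Δ, hΔ⟩ : P)) = ⊤)

include hΔ hLR hcl in
/-- Key lemma: if `Δ^(n s) ≤_L y^n` then some conjugate `z` of `y` has `Δ^s ≤_L z`. -/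
lemma star (hfr : ∀ g : G, ∃ a b : P, g = (a : G) * (b : G)⁻¹)
    (hglb : ∀ a b : P, ∃ d, IsGlbL a b d)
    (hcan : ∀ a b c : P, a * b = a * c → b = c)
    (y : G) (s : ℤ) (n : ℕ) (hn : 1 ≤ n)
    (hyn : (Δ ^ ((n:ℤ) * s))⁻¹ * y ^ n ∈ P) :
    ∃ x : G, (Δ ^ s)⁻¹ * (x⁻¹ * y * x) ∈ P := by
  obtain ⟨m, rfl⟩ : ∃ m, n = m + 1 := ⟨n - 1, by omega⟩
  set n := m + 1 with hn_def
  -- the elements a i = y^i Δ^{-i s}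
  set a : ℕ → G := fun i => y ^ i * Δ ^ (-(i:ℤ) * s) with ha
  -- a uniform N with Δ^N * a i positive for i < n
  have hNex : ∀ M : ℕ, ∃ N : ℕ, ∀ i < M, Δ ^ (N:ℤ) * a i ∈ P := by
    intro M
    induction M with
    | zero => exact ⟨0, fun i hi => absurd hi (Nat.not_lt_zero i)⟩
    | succ M ih =>
      obtain ⟨N, hNI⟩ := ih
      obtain ⟨k, hk⟩ := L1 hΔ hLR hcl hfr (a M)
      refine ⟨max N k, fun i hi => ?_⟩
      rcases Nat.lt_or_ge i M with h | h
      · exact bump hΔ (le_max_left _ _) (hNI i h)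
      · have : i = M := by omega
        subst this
        exact bump hΔ (le_max_right _ _) hk
  obtain ⟨N, hN⟩ := hNex n
  have hBmem : ∀ i : ℕ, Δ ^ (N:ℤ) * a (min i m) ∈ P := by
    intro i; exact hN _ (by omega)
  set B : ℕ → P := fun i => ⟨Δ ^ (N:ℤ) * a (min i m), hBmem i⟩ with hB
  have hBcoe : ∀ i < n, (B i : G) = Δ ^ (N:ℤ) * a i := by
    intro i hi
    simp only [hB]
    congr 2
    omega
  have hlne : (List.range n).map B ≠ [] := by
    simp [hn_def]
  obtain ⟨d, hd1, hd2⟩ := listGlb hglb _ hlne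
  have hdB : ∀ i < n, dvdL d (B i) :=
    fun i hi => hd1 _ (List.mem_map_of_mem (List.mem_range.mpr hi))
  -- the conjugator x
  set x : G := (Δ ^ (N:ℤ))⁻¹ * (d : G) with hx
  refine ⟨x, ?_⟩
  -- x⁻¹ * a i is positive for i < n
  have hx_le : ∀ i < n, x⁻¹ * a i ∈ P := by
    intro i hi
    have h1 := grp_of_dvdL (hdB i hi)
    rw [hBcoe i hi] at h1
    have heq : x⁻¹ * a i = (d:G)⁻¹ * (Δ ^ (N:ℤ) * a i) := by
      rw [hx]; group
    rw [heq]; exact h1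
  have hxinv : x⁻¹ ∈ P := by
    have h1 := hx_le 0 (by omega)
    have heq : x⁻¹ = x⁻¹ * a 0 := by
      simp [ha]
    rw [heq]; exact h1
  -- the test element c = y⁻¹ x Δ^s satisfies c ≤ a i for all i < n
  set c : G := y⁻¹ * x * Δ ^ s with hc
  have hca : ∀ i < n, c⁻¹ * a i ∈ P := by
    intro i hi
    rcases Nat.lt_or_ge i m with him | him
    · -- c⁻¹ a i = Δ^{-s} (x⁻¹ a (i+1)) Δ^{s}
      have h1 := hx_le (i+1) (by omega)
      have heq : c⁻¹ * a i
          = Δ ^ (-s) * (x⁻¹ * a (i+1)) * (Δ ^ (-s))⁻¹ := by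
        simp only [ha, hc]
        push_cast
        group
      rw [heq]
      exact conjP hΔ hLR hcl _ _ h1
    · -- i = m : use hyn
      rw [show i = m from by omega]
      have heq : c⁻¹ * a m
          = (Δ ^ (-s) * x⁻¹ * (Δ ^ (-s))⁻¹) *
            (Δ ^ ((m:ℤ) * s) * ((Δ ^ ((n:ℤ) * s))⁻¹ * y ^ n) * (Δ ^ ((m:ℤ) * s))⁻¹) := by
        simp only [ha, hc, hn_def]
        push_cast
        group
      rw [heq]
      exact P.mul_mem (conjP hΔ hLR hcl _ _ hxinv) (conjP hΔ hLR hcl _ _ hyn)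
  -- conclude c ≤ x via the glb property
  obtain ⟨k0, hk0⟩ := L1 hΔ hLR hcl hfr c
  set k : ℕ := max k0 N with hk_def
  have hq : Δ ^ (k:ℤ) * c ∈ P := bump hΔ (le_max_left _ _) hk0
  set q : P := ⟨Δ ^ (k:ℤ) * c, hq⟩ with hq_def
  have hkN : N ≤ k := le_max_right _ _
  have hecast : ((k - N : ℕ) : ℤ) = (k:ℤ) - (N:ℤ) := by omega
  have hemem : Δ ^ ((k - N : ℕ):ℤ) ∈ P := by
    rw [zpow_natCast]; exact pow_mem hΔ _
  set e : P := ⟨Δ ^ ((k - N : ℕ):ℤ), hemem⟩ with he_def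
  have hl'ne : (List.range n).map (fun b => e * B b) ≠ [] := by
    simp [hn_def]
  obtain ⟨d', hd'1, hd'2⟩ := listGlb hglb _ hl'ne
  -- q divides every e * B i
  have hqd' : dvdL q d' := by
    refine hd'2 q ?_
    intro b hb
    obtain ⟨i, hi, rfl⟩ := List.mem_map.mp hb
    have hi' : i < n := List.mem_range.mp hi
    refine dvdL_of_grp ?_
    have heq : (q : G)⁻¹ * ((e * B i : P) : G) = c⁻¹ * a i := by
      push_cast [hq_def, he_def, hB]
      rw [hecast, show i ⊓ m = i from by omega]
      group
    rw [heq]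
    exact hca i hi'
  have hed' : dvdL e d' := by
    refine hd'2 e ?_
    intro b hb
    obtain ⟨i, hi, rfl⟩ := List.mem_map.mp hb
    exact ⟨B i, rfl⟩
  obtain ⟨d'', hd''⟩ := hed'
  have hd''b : ∀ i < n, dvdL d'' (B i) := by
    intro i hi
    obtain ⟨v, hv⟩ := hd'1 (e * B i)
      (List.mem_map.mpr ⟨i, List.mem_range.mpr hi, rfl⟩)
    refine ⟨v, hcan e _ _ ?_⟩
    rw [← mul_assoc, hd'', hv]
  have hd''d : dvdL d'' d := by
    refine hd2 d'' ?_
    intro b hb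
    obtain ⟨i, hi, rfl⟩ := List.mem_map.mp hb
    exact hd''b i (List.mem_range.mp hi)
  have hqed : dvdL q (e * d) := by
    refine dvdL_trans hqd' ?_
    obtain ⟨w, hw⟩ := hd''d
    exact ⟨w, by rw [← hd'', mul_assoc, hw]⟩
  have hfinal := grp_of_dvdL hqed
  have heq : (q : G)⁻¹ * ((e * d : P) : G) = (Δ ^ s)⁻¹ * (x⁻¹ * y * x) := by
    push_cast [hq_def, he_def, hc, hx]
    rw [hecast]
    group
  rw [heq] at hfinal
  exact hfinal

end Star

section Main
variable {G : Type*} [Group G] {P : Submonoid G} {Δ : G} (hΔ : Δ ∈ P)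
variable (hLR : Lset (⟨Δ, hΔ⟩ : P) = Rset (⟨Δ, hΔ⟩ : P))
variable (hcl : Submonoid.closure (Lset (⟨Δ, hΔ⟩ : P)) = ⊤)

include hΔ hLR hcl in
lemma powC (p : G) (hp : p ∈ P) (r : ℤ) :
    ∀ n : ℕ, (Δ ^ ((n:ℤ) * r))⁻¹ * (Δ ^ r * p) ^ n ∈ P := by
  intro n
  induction n with
  | zero => simpa using P.one_mem
  | succ n ih =>
    have heq : (Δ ^ (((n+1 : ℕ):ℤ) * r))⁻¹ * (Δ ^ r * p) ^ (n+1)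
        = (Δ ^ (-r) * ((Δ ^ ((n:ℤ) * r))⁻¹ * (Δ ^ r * p) ^ n) * (Δ ^ (-r))⁻¹) * p := by
      rw [pow_succ]
      push_cast
      group
    rw [heq]
    exact P.mul_mem (conjP hΔ hLR hcl _ _ ih) hp

end Main


/-- **Theorem 6.1 (1).** For a Garside group `G`, `g ∈ G` and `n ≥ 1`,
`inf_s(g) ≤ inf_s(gⁿ)/n < inf_s(g) + 1`, i.e. `n·inf_s(g) ≤ inf_s(gⁿ) < n·(inf_s(g)+1)`. -/
theorem infs_pow {G : Type*} [Group G] (P : Submonoid G) (Δ : G)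
    (hG : IsGarsideGroup P Δ) (g : G) (n : ℕ) (hn : 1 ≤ n) (r m : ℤ)
    (hr : IsGreatest {t : ℤ | ∃ h : G, IsConj g h ∧ gdvdL P (Δ ^ t) h} r)
    (hm : IsGreatest {t : ℤ | ∃ h : G, IsConj (g ^ n) h ∧ gdvdL P (Δ ^ t) h} m) :
    (n : ℤ) * r ≤ m ∧ m < (n : ℤ) * r + (n : ℤ) := by
  obtain ⟨⟨hfg, hcan, hrcan, hatom, hglb, hlub, hglbR, hlubR, hgar⟩, hfr, hΔ, hLR, hcl⟩ := hG
  constructor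
  · -- lower bound
    obtain ⟨h, hconj, hdiv⟩ := hr.1
    have hdiv' : (Δ ^ r)⁻¹ * h ∈ P := hdiv
    have hmem : ((n:ℤ) * r) ∈ {t : ℤ | ∃ h : G, IsConj (g ^ n) h ∧ gdvdL P (Δ ^ t) h} := by
      refine ⟨h ^ n, ?_, ?_⟩
      · obtain ⟨cu, hcu⟩ := isConj_iff.mp hconj
        exact isConj_iff.mpr ⟨cu, by rw [← hcu, conj_pow]⟩
      · show (Δ ^ ((n:ℤ) * r))⁻¹ * h ^ n ∈ P
        have hh : h = Δ ^ r * ((Δ ^ r)⁻¹ * h) := by group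
        have hpc := powC hΔ hLR hcl _ hdiv' r n
        rw [← hh] at hpc
        exact hpc
    exact hm.2 hmem
  · -- upper bound
    by_contra hcon
    push_neg at hcon
    obtain ⟨h, hconj, hdiv⟩ := hm.1
    obtain ⟨cu, hcu⟩ := isConj_iff.mp hconj
    set y : G := cu * g * cu⁻¹ with hy
    have hyn : y ^ n = h := by rw [hy, conj_pow, hcu]
    have hdiv' : (Δ ^ m)⁻¹ * y ^ n ∈ P := by rw [hyn]; exact hdiv
    set s : ℤ := r + 1 with hs
    have hns : (n:ℤ) * s ≤ m := by
      have : (n:ℤ) * r + n ≤ m := hcon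
      rw [hs]; linarith [this]
    have hpos : (Δ ^ ((n:ℤ) * s))⁻¹ * y ^ n ∈ P := by
      have heq : (Δ ^ ((n:ℤ) * s))⁻¹ * y ^ n
          = Δ ^ (m - (n:ℤ) * s) * ((Δ ^ m)⁻¹ * y ^ n) := by group
      rw [heq]
      exact P.mul_mem (zpow_nonneg_mem hΔ (by omega)) hdiv'
    obtain ⟨x, hx⟩ := star hΔ hLR hcl hfr hglb hcan y s n hn hpos
    have hmem : s ∈ {t : ℤ | ∃ h : G, IsConj g h ∧ gdvdL P (Δ ^ t) h} := by
      refine ⟨x⁻¹ * y * x, ?_, hx⟩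
      have h1 : IsConj g y := isConj_iff.mpr ⟨cu, rfl⟩
      have h2 : IsConj y (x⁻¹ * y * x) := isConj_iff.mpr ⟨x⁻¹, by group⟩
      exact h1.trans h2
    have := hr.2 hmem
    omega
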